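/- Let A ∈ ℝ^{m×n} have rank r, T a set of r column indices with Â := A[:,T] of rank r, and Z := sign(Â⁺) entrywise. Then there exist W ∈ ℝ^{m×n} and a skew-symmetric U ∈ ℝ^{m×m} such that ÂᵀWAᵀ + ÂᵀU = Z and ⟨A, W⟩ = ‖Â⁺‖₁. -/

import Mathlib

open Matrix

lemma isUnit_of_rank_eq_card {k : ℕ} (M : Matrix (Fin k) (Fin k) ℝ) (h : M.rank = k) :
    IsUnit M := by
  rw [← Matrix.mulVec_injective_iff_isUnit]
  have hrange : LinearMap.range M.mulVecLin = ⊤ := by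
    apply Submodule.eq_top_of_finrank_eq
    rw [show Module.finrank ℝ ↥(LinearMap.range M.mulVecLin) = M.rank from rfl, h,
      Module.finrank_fin_fun]
  have hsurj : Function.Surjective M.mulVecLin := LinearMap.range_eq_top.mp hrange
  exact LinearMap.injective_iff_surjective.mpr hsurj

lemma real_sign_mul_self (x : ℝ) : Real.sign x * x = |x| := by
  rcases lt_trichotomy x 0 with h | h | h
  · rw [Real.sign_of_neg h, abs_of_neg h]; ring
  · simp [h]
  · rw [Real.sign_of_pos h, abs_of_pos h]; ring

theorem dual_certificate_exists {m n r : ℕ}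
    (A : Matrix (Fin m) (Fin n) ℝ) (hrank : A.rank = r)
    (f : Fin r → Fin n) (hf : Function.Injective f)
    (hAhat : (A.submatrix id f).rank = r)
    (Apinv : Matrix (Fin r) (Fin m) ℝ)
    (hApinv : Apinv = ((A.submatrix id f)ᵀ * (A.submatrix id f))⁻¹ * (A.submatrix id f)ᵀ)
    (Z : Matrix (Fin r) (Fin m) ℝ)
    (hZ : ∀ k j, Z k j = Real.sign (Apinv k j)) :
    ∃ (W : Matrix (Fin m) (Fin n) ℝ) (U : Matrix (Fin m) (Fin m) ℝ),
      Uᵀ = -U ∧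
      (A.submatrix id f)ᵀ * W * Aᵀ + (A.submatrix id f)ᵀ * U = Z ∧
      ∑ i, ∑ j, A i j * W i j = ∑ k, ∑ j, |Apinv k j| := by
  classical
  set Ah := A.submatrix id f with hAhdef
  set G := (Ahᵀ * Ah)⁻¹ with hGdef
  -- invertibility of ÂᵀÂ
  have h1 : IsUnit (Ahᵀ * Ah) := by
    apply isUnit_of_rank_eq_card
    rw [Matrix.rank_transpose_mul_self, hAhat]
  have hGsym : Gᵀ = G := by
    rw [hGdef, Matrix.transpose_nonsing_inv, Matrix.transpose_mul, Matrix.transpose_transpose]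
  have hGl : G * (Ahᵀ * Ah) = 1 :=
    Matrix.nonsing_inv_mul _ ((Matrix.isUnit_iff_isUnit_det _).mp h1)
  have hGr : (Ahᵀ * Ah) * G = 1 :=
    Matrix.mul_nonsing_inv _ ((Matrix.isUnit_iff_isUnit_det _).mp h1)
  have hP : Apinv = G * Ahᵀ := hApinv
  set Q := Ah * G * Ahᵀ with hQdef
  have hAhtQ : Ahᵀ * Q = Ahᵀ := by
    calc Ahᵀ * Q = (Ahᵀ * Ah * G) * Ahᵀ := by simp only [hQdef, Matrix.mul_assoc]
    _ = Ahᵀ := by rw [hGr, Matrix.one_mul]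
  have hQAh : Q * Ah = Ah := by
    calc Q * Ah = Ah * (G * (Ahᵀ * Ah)) := by simp only [hQdef, Matrix.mul_assoc]
    _ = Ah := by rw [hGl, Matrix.mul_one]
  -- column space inclusion: range A.mulVecLin ≤ range Ah.mulVecLin
  set S : Matrix (Fin n) (Fin r) ℝ := fun i k => if i = f k then 1 else 0 with hSdef
  have hAS : Ah = A * S := by
    ext i k
    rw [Matrix.mul_apply]
    simp [hAhdef, Matrix.mul_apply, hSdef]
  have hle : LinearMap.range Ah.mulVecLin ≤ LinearMap.range A.mulVecLin := by
    rw [hAS, Matrix.mulVecLin_mul]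
    exact LinearMap.range_comp_le_range _ _
  have hrangeeq : LinearMap.range Ah.mulVecLin = LinearMap.range A.mulVecLin := by
    apply Submodule.eq_of_le_of_finrank_le hle
    rw [show Module.finrank ℝ ↥(LinearMap.range A.mulVecLin) = A.rank from rfl, hrank,
      show Module.finrank ℝ ↥(LinearMap.range Ah.mulVecLin) = Ah.rank from rfl, hAhat]
  have hQA : Q * A = A := by
    ext i j
    have hcol : (fun k => A k j) ∈ LinearMap.range Ah.mulVecLin := by
      rw [hrangeeq]
      exact ⟨Pi.single j 1, by ext i; simp [Matrix.mulVecLin_apply]⟩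
    obtain ⟨c, hc⟩ := hcol
    have h2 : Q.mulVec (fun k => A k j) = fun k => A k j := by
      rw [← hc]
      show Q *ᵥ (Ah *ᵥ c) = Ah *ᵥ c
      calc Q *ᵥ (Ah *ᵥ c) = (Q * Ah) *ᵥ c := by rw [Matrix.mulVec_mulVec]
      _ = Ah *ᵥ c := by rw [hQAh]
    have h3 := congrFun h2 i
    simpa [Matrix.mulVec, dotProduct, Matrix.mul_apply] using h3
  -- B and its invertibility
  set B := Apinv * A with hBdef
  have hAB : Ah * B = A := by
    rw [hBdef, hP, ← Matrix.mul_assoc, ← Matrix.mul_assoc, ← hQdef, hQA]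
  have hBBt : IsUnit (B * Bᵀ) := by
    apply isUnit_of_rank_eq_card
    rw [Matrix.rank_self_mul_transpose]
    refine le_antisymm (Matrix.rank_le_height B) ?_
    calc r = A.rank := hrank.symm
    _ = (Ah * B).rank := by rw [hAB]
    _ ≤ B.rank := Matrix.rank_mul_le_right _ _
  set H := (B * Bᵀ)⁻¹ with hHdef
  have hHl : H * (B * Bᵀ) = 1 :=
    Matrix.nonsing_inv_mul _ ((Matrix.isUnit_iff_isUnit_det _).mp hBBt)
  -- W and U
  set C := Z * Ah * G * H with hCdef
  refine ⟨Ah * G * C * B, (Ah * G * Z * (1 - Q)) - (Ah * G * Z * (1 - Q))ᵀ, ?_, ?_, ?_⟩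
  · rw [Matrix.transpose_sub, Matrix.transpose_transpose, neg_sub]
  · have hAhW : Ahᵀ * (Ah * G * C * B) = C * B := by
      calc Ahᵀ * (Ah * G * C * B) = (Ahᵀ * Ah * G) * (C * B) := by
            simp only [Matrix.mul_assoc]
      _ = C * B := by rw [hGr, Matrix.one_mul]
    have hAt : Aᵀ = Bᵀ * Ahᵀ := by rw [← hAB, Matrix.transpose_mul]
    have e1 : Ahᵀ * (Ah * G * C * B) * Aᵀ = Z * Q := by
      rw [hAhW, hAt, hCdef]
      calc Z * Ah * G * H * B * (Bᵀ * Ahᵀ)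
          = Z * Ah * G * (H * (B * Bᵀ)) * Ahᵀ := by
            simp only [Matrix.mul_assoc]
      _ = Z * Ah * G * Ahᵀ := by rw [hHl, Matrix.mul_one]
      _ = Z * Q := by simp only [hQdef, Matrix.mul_assoc]
    have e2 : Ahᵀ * ((Ah * G * Z * (1 - Q)) - (Ah * G * Z * (1 - Q))ᵀ) = Z - Z * Q := by
      have hx : Ahᵀ * (Ah * G * Z * (1 - Q)) = Z * (1 - Q) := by
        calc Ahᵀ * (Ah * G * Z * (1 - Q)) = (Ahᵀ * Ah * G) * (Z * (1 - Q)) := by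
              simp only [Matrix.mul_assoc]
        _ = Z * (1 - Q) := by rw [hGr, Matrix.one_mul]
      have hxt : Ahᵀ * (Ah * G * Z * (1 - Q))ᵀ = 0 := by
        have : (Ah * G * Z * (1 - Q))ᵀ = (1 - Q)ᵀ * (Zᵀ * (Gᵀ * Ahᵀ)) := by
          simp [Matrix.transpose_mul, Matrix.mul_assoc]
        rw [this, ← Matrix.mul_assoc, Matrix.transpose_sub, Matrix.transpose_one,
          Matrix.mul_sub, Matrix.mul_one]
        have hQsym : Qᵀ = Q := by
          rw [hQdef, Matrix.transpose_mul, Matrix.transpose_mul, Matrix.transpose_transpose,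
            hGsym, Matrix.mul_assoc]
        rw [hQsym, hAhtQ, sub_self, Matrix.zero_mul]
      rw [Matrix.mul_sub, hx, hxt, Matrix.mul_sub, Matrix.mul_one, sub_zero]
    rw [e1, e2]; abel
  · -- trace identity
    have hAhW : Ahᵀ * (Ah * G * C * B) = C * B := by
      calc Ahᵀ * (Ah * G * C * B) = (Ahᵀ * Ah * G) * (C * B) := by
            simp only [Matrix.mul_assoc]
      _ = C * B := by rw [hGr, Matrix.one_mul]
    have hAt : Aᵀ = Bᵀ * Ahᵀ := by rw [← hAB, Matrix.transpose_mul]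
    have key : Aᵀ * (Ah * G * C * B) = Bᵀ * (C * B) := by
      rw [hAt, Matrix.mul_assoc, hAhW]
    have htr : (Aᵀ * (Ah * G * C * B)).trace = (Z * (Ah * G)).trace := by
      rw [key, Matrix.trace_mul_comm, hCdef]
      congr 1
      calc Z * Ah * G * H * B * Bᵀ = Z * Ah * G * (H * (B * Bᵀ)) := by
            simp only [Matrix.mul_assoc]
      _ = Z * (Ah * G) := by rw [hHl, Matrix.mul_one, Matrix.mul_assoc]
    have lhs : ∑ i, ∑ j, A i j * (Ah * G * C * B) i j = (Aᵀ * (Ah * G * C * B)).trace := by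
      rw [Matrix.trace, Finset.sum_comm]
      simp [Matrix.mul_apply, Matrix.diag, Matrix.transpose_apply]
    have rhs : ∑ k, ∑ j, |Apinv k j| = (Z * (Ah * G)).trace := by
      have hPt : (Ah * G) = Apinvᵀ := by
        rw [hP, Matrix.transpose_mul, Matrix.transpose_transpose, hGsym]
      rw [hPt, Matrix.trace]
      simp only [Matrix.diag, Matrix.mul_apply, Matrix.transpose_apply]
      congr 1; ext k; congr 1; ext j
      rw [hZ k j, real_sign_mul_self]
    rw [lhs, htr, rhs]
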